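/- arXiv:1803.11114 — 2 statements merged into one kernel-verified Lean document; each statement's English description precedes it below -/
import Mathlib

section
/- Let 0 < ε ≤ 1/40 be real and let δᵢ = ε/i^{2/3} for each integer i ≥ 1. Then for every integer k ≥ 1: ∏_{i=1}^{k−1} (1 + δᵢ/2 − 2δᵢ²) ≥ e^{−ε/2} · √( ∏_{i=1}^{k−1} (1 + δᵢ) ). -/
open Finset Real

private lemma cube_root_pow (i : ℕ) : ((i:ℝ) ^ ((1:ℝ)/3)) ^ 3 = i := by
  rw [← Real.rpow_natCast ((i:ℝ) ^ ((1:ℝ)/3)) 3, ← Real.rpow_mul (Nat.cast_nonneg i)]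
  norm_num

private lemma two_thirds_eq (i : ℕ) : (i:ℝ) ^ ((2:ℝ)/3) = ((i:ℝ) ^ ((1:ℝ)/3)) ^ 2 := by
  rw [← Real.rpow_natCast ((i:ℝ) ^ ((1:ℝ)/3)) 2, ← Real.rpow_mul (Nat.cast_nonneg i)]
  norm_num

private lemma one_le_cuberoot {i : ℕ} (hi : 1 ≤ i) : 1 ≤ (i:ℝ) ^ ((1:ℝ)/3) := by
  have h1 : (1:ℝ) ≤ i := by exact_mod_cast hi
  calc (1:ℝ) = (1:ℝ) ^ ((1:ℝ)/3) := (Real.one_rpow _).symm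
    _ ≤ (i:ℝ) ^ ((1:ℝ)/3) := Real.rpow_le_rpow zero_le_one h1 (by norm_num)

private lemma sum_inv_bound (n : ℕ) (hn : 1 ≤ n) :
    ∑ i ∈ Finset.Icc 1 n, 1 / ((i:ℝ) ^ ((1:ℝ)/3)) ^ 4 ≤ 4 - 3 / ((n:ℝ) ^ ((1:ℝ)/3)) := by
  induction n, hn using Nat.le_induction with
  | base => norm_num [Real.one_rpow]
  | succ m hm ih =>
    rw [Finset.sum_Icc_succ_top (by omega)]
    set u := (m:ℝ) ^ ((1:ℝ)/3) with hu
    set v := ((m+1:ℕ):ℝ) ^ ((1:ℝ)/3) with hv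
    have hu1 : 1 ≤ u := one_le_cuberoot hm
    have hv1 : 1 ≤ v := one_le_cuberoot (by omega)
    have hu3 : u ^ 3 = m := cube_root_pow m
    have hv3 : v ^ 3 = (m:ℝ) + 1 := by rw [hv, cube_root_pow]; push_cast; ring
    have huv : u ≤ v := by
      have h3 : u ^ 3 ≤ v ^ 3 := by rw [hu3, hv3]; linarith
      exact le_of_pow_le_pow_left₀ (by norm_num) (by positivity) h3
    have h1 : (v - u) * (v^2 + u*v + u^2) = 1 := by linear_combination hv3 - hu3
    have h2 : 1 ≤ 3 * v^2 * (v - u) := by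
      nlinarith [mul_nonneg (mul_nonneg (sub_nonneg.2 huv) (sub_nonneg.2 huv))
        (by positivity : (0:ℝ) ≤ 2*v + u)]
    have h3 : u * v ≤ 3 * v^4 * (v - u) := by
      nlinarith [mul_nonneg (by positivity : (0:ℝ) ≤ v^2) (by linarith : (0:ℝ) ≤ 3*v^2*(v-u) - 1)]
    have key : 1 / v ^ 4 ≤ 3 / u - 3 / v := by
      rw [div_sub_div _ _ (by positivity) (by positivity),
        div_le_div_iff₀ (by positivity) (by positivity)]
      nlinarith
    linarith

private lemma sqrt_prod (s : Finset ℕ) (f : ℕ → ℝ) (h : ∀ i ∈ s, 0 ≤ f i) :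
    Real.sqrt (∏ i ∈ s, f i) = ∏ i ∈ s, Real.sqrt (f i) := by
  induction s using Finset.cons_induction with
  | empty => simp
  | cons a s ha ih =>
    rw [Finset.prod_cons, Finset.prod_cons,
      Real.sqrt_mul (h a (Finset.mem_cons_self a s)),
      ih (fun i hi => h i (Finset.mem_cons_of_mem hi))]

private lemma term_bound {d : ℝ} (hd0 : 0 ≤ d) (hd : d ≤ 1/40) :
    Real.exp (-(5 * d^2)) * Real.sqrt (1 + d) ≤ 1 + d/2 - 2 * d^2 := by
  have hexp : Real.exp (-(5 * d^2)) ≤ 1 / (1 + 5 * d^2) := by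
    rw [Real.exp_neg, inv_eq_one_div]
    apply one_div_le_one_div_of_le (by positivity)
    linarith [Real.add_one_le_exp (5 * d^2)]
  have hsqrt : Real.sqrt (1 + d) ≤ 1 + d/2 := by
    rw [show (1 + d/2) = Real.sqrt ((1 + d/2)^2) from
      (Real.sqrt_sq (by linarith)).symm]
    apply Real.sqrt_le_sqrt
    nlinarith [sq_nonneg d]
  have hstep : (1 + d/2) / (1 + 5*d^2) ≤ 1 + d/2 - 2*d^2 := by
    rw [div_le_iff₀ (by positivity)]
    nlinarith [mul_nonneg hd0 hd0, mul_nonneg (mul_nonneg hd0 hd0) hd0,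
      mul_le_mul_of_nonneg_left hd (mul_nonneg (mul_nonneg hd0 hd0) hd0)]
  calc Real.exp (-(5 * d^2)) * Real.sqrt (1 + d)
      ≤ (1 / (1 + 5 * d^2)) * (1 + d/2) :=
        mul_le_mul hexp hsqrt (Real.sqrt_nonneg _) (by positivity)
    _ = (1 + d/2) / (1 + 5*d^2) := by ring
    _ ≤ 1 + d/2 - 2*d^2 := hstep

theorem product_lower_bound
    (ε : ℝ) (hε0 : 0 < ε) (hε : ε ≤ 1 / 40)
    (δ : ℕ → ℝ) (hδ : ∀ i : ℕ, δ i = ε / (i : ℝ) ^ ((2 : ℝ) / 3))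
    (k : ℕ) (hk : 1 ≤ k) :
    Real.exp (-ε / 2) * Real.sqrt (∏ i ∈ Finset.Icc 1 (k - 1), (1 + δ i)) ≤
      ∏ i ∈ Finset.Icc 1 (k - 1), (1 + δ i / 2 - 2 * δ i ^ 2) := by
  set n := k - 1 with hn
  -- basic facts about δ i for i ≥ 1
  have hδ0 : ∀ i ∈ Finset.Icc 1 n, 0 ≤ δ i := by
    intro i hi
    have hi1 : 1 ≤ i := (Finset.mem_Icc.1 hi).1
    rw [hδ]
    have : (0:ℝ) < (i:ℝ) ^ ((2:ℝ)/3) := by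
      apply Real.rpow_pos_of_pos
      exact_mod_cast Nat.lt_of_lt_of_le Nat.zero_lt_one hi1
    positivity
  have hδε : ∀ i ∈ Finset.Icc 1 n, δ i ≤ ε := by
    intro i hi
    have hi1 : 1 ≤ i := (Finset.mem_Icc.1 hi).1
    rw [hδ]
    have h1 : 1 ≤ (i:ℝ) ^ ((2:ℝ)/3) := by
      calc (1:ℝ) = (1:ℝ) ^ ((2:ℝ)/3) := (Real.one_rpow _).symm
        _ ≤ (i:ℝ) ^ ((2:ℝ)/3) :=
          Real.rpow_le_rpow zero_le_one (by exact_mod_cast hi1) (by norm_num)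
    calc ε / (i:ℝ) ^ ((2:ℝ)/3) ≤ ε / 1 := by
          apply div_le_div_of_nonneg_left hε0.le (by linarith) h1
      _ = ε := div_one ε
  -- the sum of 5 δᵢ² is at most ε/2
  have hsum : ∑ i ∈ Finset.Icc 1 n, 5 * δ i ^ 2 ≤ ε / 2 := by
    have heq : ∀ i ∈ Finset.Icc 1 n, 5 * δ i ^ 2
        = 5 * ε^2 * (1 / ((i:ℝ) ^ ((1:ℝ)/3)) ^ 4) := by
      intro i hi
      have hi1 : 1 ≤ i := (Finset.mem_Icc.1 hi).1
      have hru : 1 ≤ (i:ℝ) ^ ((1:ℝ)/3) := one_le_cuberoot hi1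
      rw [hδ, two_thirds_eq, div_pow]
      field_simp
    rw [Finset.sum_congr rfl heq, ← Finset.mul_sum]
    rcases Nat.eq_zero_or_pos n with h0 | hpos
    · simp [h0]
      positivity
    · have hb := sum_inv_bound n hpos
      have hc : 3 / ((n:ℝ) ^ ((1:ℝ)/3)) > 0 := by
        have := one_le_cuberoot hpos
        positivity
      have : ∑ i ∈ Finset.Icc 1 n, 1 / ((i:ℝ) ^ ((1:ℝ)/3)) ^ 4 ≤ 4 := by linarith
      calc 5 * ε^2 * ∑ i ∈ Finset.Icc 1 n, 1 / ((i:ℝ) ^ ((1:ℝ)/3)) ^ 4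
          ≤ 5 * ε^2 * 4 := by
            apply mul_le_mul_of_nonneg_left this (by positivity)
        _ = 20 * ε * ε := by ring
        _ ≤ (1/2) * ε := by nlinarith
        _ = ε / 2 := by ring
  -- exp bound on the product of exponentials
  have hexp : Real.exp (-ε / 2) ≤ ∏ i ∈ Finset.Icc 1 n, Real.exp (-(5 * δ i ^ 2)) := by
    rw [← Real.exp_sum]
    apply Real.exp_le_exp.2
    have hneg : (∑ i ∈ Finset.Icc 1 n, -(5 * δ i ^ 2))
        = -(∑ i ∈ Finset.Icc 1 n, 5 * δ i ^ 2) := by simp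
    rw [hneg]
    linarith
  -- combine
  have h1 : ∀ i ∈ Finset.Icc 1 n, (0:ℝ) ≤ 1 + δ i := fun i hi => by linarith [hδ0 i hi]
  rw [sqrt_prod _ _ h1]
  calc Real.exp (-ε / 2) * ∏ i ∈ Finset.Icc 1 n, Real.sqrt (1 + δ i)
      ≤ (∏ i ∈ Finset.Icc 1 n, Real.exp (-(5 * δ i ^ 2)))
          * ∏ i ∈ Finset.Icc 1 n, Real.sqrt (1 + δ i) := by
        apply mul_le_mul_of_nonneg_right hexp
        exact Finset.prod_nonneg fun i _ => Real.sqrt_nonneg _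
    _ = ∏ i ∈ Finset.Icc 1 n, (Real.exp (-(5 * δ i ^ 2)) * Real.sqrt (1 + δ i)) :=
        (Finset.prod_mul_distrib).symm
    _ ≤ ∏ i ∈ Finset.Icc 1 n, (1 + δ i / 2 - 2 * δ i ^ 2) := by
        apply Finset.prod_le_prod
        · intro i hi
          exact mul_nonneg (Real.exp_nonneg _) (Real.sqrt_nonneg _)
        · intro i hi
          exact term_bound (hδ0 i hi) (le_trans (hδε i hi) hε)
end

section
/- Let 0 < ε ≤ 1/40 be real and let δᵢ = ε/i^{2/3} for each integer i ≥ 1. Then for every integer k ≥ 1: ∏_{i=1}^{k−1} (1 + δᵢ/2 + 2δᵢ²) ≤ e^{ε/4} · √( ∏_{i=1}^{k−1} (1 + δᵢ) ). -/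
open Finset Real

-- termwise inequality
lemma term_le (x : ℝ) (hx0 : 0 ≤ x) (hx : x ≤ 1/40) :
    1 + x/2 + 2*x^2 ≤ Real.exp (17/8 * x^2) * Real.sqrt (1+x) := by
  have h1 : (1 + x/2 - x^2/8) ≤ Real.sqrt (1+x) := by
    rw [show (1:ℝ)+x = ((1+x/2-x^2/8)^2 + (x^3/8 - x^4/64)) by ring]
    have h := Real.sqrt_le_sqrt (show (1+x/2-x^2/8)^2 ≤ (1+x/2-x^2/8)^2 + (x^3/8 - x^4/64) by nlinarith [mul_nonneg (pow_nonneg hx0 3) (show (0:ℝ) ≤ 8 - x by linarith)])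
    calc 1 + x/2 - x^2/8 = Real.sqrt ((1+x/2-x^2/8)^2) := by
            rw [Real.sqrt_sq (by nlinarith)]
      _ ≤ _ := h
  have h2 : 1 + 17/8*x^2 ≤ Real.exp (17/8*x^2) := by
    have := Real.add_one_le_exp (17/8*x^2); linarith
  have hs : (0:ℝ) ≤ 1 + x/2 - x^2/8 := by nlinarith
  calc 1 + x/2 + 2*x^2 ≤ (1 + 17/8*x^2) * (1 + x/2 - x^2/8) := by nlinarith [mul_nonneg (pow_nonneg hx0 3) (show (0:ℝ) ≤ 4 - x by linarith)]
    _ ≤ Real.exp (17/8*x^2) * Real.sqrt (1+x) := by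
        apply mul_le_mul h2 h1 hs (le_of_lt (Real.exp_pos _))

-- telescoping bound step
lemma step_bound (m : ℕ) (hm : 1 ≤ m) :
    1/((m:ℝ)+1)^((4:ℝ)/3) ≤ 3/(m:ℝ)^((1:ℝ)/3) - 3/((m:ℝ)+1)^((1:ℝ)/3) := by
  set a := (m:ℝ)^((1:ℝ)/3) with ha
  set b := ((m:ℝ)+1)^((1:ℝ)/3) with hb
  have hm1 : (1:ℝ) ≤ (m:ℝ) := by exact_mod_cast hm
  have ha0 : 0 < a := Real.rpow_pos_of_pos (by linarith) _
  have hb0 : 0 < b := Real.rpow_pos_of_pos (by linarith) _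
  have hab : a ≤ b := Real.rpow_le_rpow (by linarith) (by linarith) (by norm_num)
  have ha3 : a^3 = (m:ℝ) := by
    rw [ha, ← Real.rpow_natCast ((m:ℝ)^((1:ℝ)/3)) 3, ← Real.rpow_mul (by linarith)]
    norm_num
  have hb3 : b^3 = (m:ℝ)+1 := by
    rw [hb, ← Real.rpow_natCast (((m:ℝ)+1)^((1:ℝ)/3)) 3, ← Real.rpow_mul (by linarith)]
    norm_num
  have hb4 : ((m:ℝ)+1)^((4:ℝ)/3) = b^4 := by
    rw [hb, ← Real.rpow_natCast (((m:ℝ)+1)^((1:ℝ)/3)) 4, ← Real.rpow_mul (by linarith)]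
    norm_num
  rw [hb4]
  rw [div_sub_div _ _ (ne_of_gt ha0) (ne_of_gt hb0), div_le_div_iff₀ (by positivity) (by positivity)]
  have key : b^3 = a^3 + 1 := by rw [ha3, hb3]
  nlinarith [pow_pos hb0 2, pow_pos ha0 2, mul_pos ha0 hb0, sq_nonneg (b-a), mul_pos (mul_pos ha0 hb0) hb0]

-- sum bound
lemma sum_bound (m : ℕ) (hm : 1 ≤ m) :
    ∑ i ∈ Finset.Icc 1 m, 1/(i:ℝ)^((4:ℝ)/3) ≤ 4 - 3/(m:ℝ)^((1:ℝ)/3) := by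
  induction m, hm using Nat.le_induction with
  | base => norm_num
  | succ n hn ih =>
    rw [Finset.sum_Icc_succ_top (by omega)]
    have := step_bound n hn
    push_cast
    push_cast at this ih
    linarith

lemma prod_sqrt (s : Finset ℕ) (f : ℕ → ℝ) (hf : ∀ i ∈ s, 0 ≤ f i) :
    ∏ i ∈ s, Real.sqrt (f i) = Real.sqrt (∏ i ∈ s, f i) := by
  induction s using Finset.cons_induction with
  | empty => simp
  | cons a t ha ih =>
    rw [Finset.prod_cons, Finset.prod_cons, Real.sqrt_mul (hf a (Finset.mem_cons_self a t)),
      ih (fun i hi => hf i (Finset.mem_cons_of_mem hi))]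

theorem product_upper_bound
    (ε : ℝ) (hε0 : 0 < ε) (hε : ε ≤ 1 / 40)
    (δ : ℕ → ℝ) (hδ : ∀ i : ℕ, δ i = ε / (i : ℝ) ^ ((2 : ℝ) / 3))
    (k : ℕ) (hk : 1 ≤ k) :
    (∏ i ∈ Finset.Icc 1 (k - 1), (1 + δ i / 2 + 2 * δ i ^ 2)) ≤
      Real.exp (ε / 4) * Real.sqrt (∏ i ∈ Finset.Icc 1 (k - 1), (1 + δ i)) := by
  set s := Finset.Icc 1 (k-1) with hs
  have hbounds : ∀ i ∈ s, 0 ≤ δ i ∧ δ i ≤ 1/40 := by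
    intro i hi
    have hi1 : 1 ≤ i := (Finset.mem_Icc.mp hi).1
    have hi1' : (1:ℝ) ≤ (i:ℝ) := by exact_mod_cast hi1
    have hp : (1:ℝ) ≤ (i:ℝ)^((2:ℝ)/3) := Real.one_le_rpow hi1' (by norm_num)
    have hp0 : (0:ℝ) < (i:ℝ)^((2:ℝ)/3) := by linarith
    constructor
    · rw [hδ i]; positivity
    · rw [hδ i]
      calc ε / (i:ℝ)^((2:ℝ)/3) ≤ ε / 1 := by
            apply div_le_div_of_nonneg_left (le_of_lt hε0) (by norm_num) hp
        _ ≤ 1/40 := by linarith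
  have hstep : (∏ i ∈ s, (1 + δ i / 2 + 2 * δ i ^ 2)) ≤
      ∏ i ∈ s, (Real.exp (17/8 * δ i ^ 2) * Real.sqrt (1 + δ i)) := by
    apply Finset.prod_le_prod
    · intro i hi
      obtain ⟨h0, _⟩ := hbounds i hi
      positivity
    · intro i hi
      obtain ⟨h0, h1⟩ := hbounds i hi
      exact term_le (δ i) h0 h1
  have hsplit : ∏ i ∈ s, (Real.exp (17/8 * δ i ^ 2) * Real.sqrt (1 + δ i)) =
      Real.exp (∑ i ∈ s, 17/8 * δ i ^ 2) * Real.sqrt (∏ i ∈ s, (1 + δ i)) := by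
    rw [Finset.prod_mul_distrib, Real.exp_sum, prod_sqrt s _ (fun i hi => by
      have := (hbounds i hi).1; linarith)]
  have hsum : (∑ i ∈ s, 17/8 * δ i ^ 2) ≤ ε/4 := by
    have heq : ∀ i ∈ s, 17/8 * δ i ^ 2 = 17/8 * ε^2 * (1/(i:ℝ)^((4:ℝ)/3)) := by
      intro i hi
      have hi1 : 1 ≤ i := (Finset.mem_Icc.mp hi).1
      have hi0 : (0:ℝ) ≤ (i:ℝ) := Nat.cast_nonneg i
      have h43 : ((i:ℝ)^((2:ℝ)/3))^2 = (i:ℝ)^((4:ℝ)/3) := by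
        rw [← Real.rpow_natCast ((i:ℝ)^((2:ℝ)/3)) 2, ← Real.rpow_mul hi0]
        norm_num
      rw [hδ i, div_pow, h43]
      ring
    rw [Finset.sum_congr rfl heq, ← Finset.mul_sum]
    rcases Nat.eq_zero_or_pos (k-1) with h0 | hpos
    · rw [hs, h0]
      simp
      positivity
    · have hb := sum_bound (k-1) hpos
      have h3 : (0:ℝ) ≤ 3/((k-1:ℕ):ℝ)^((1:ℝ)/3) := by positivity
      have : ∑ i ∈ s, 1/(i:ℝ)^((4:ℝ)/3) ≤ 4 := by rw [hs]; linarith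
      have hnn : (0:ℝ) ≤ ∑ i ∈ s, 1/(i:ℝ)^((4:ℝ)/3) :=
        Finset.sum_nonneg (fun i _ => by positivity)
      calc 17/8 * ε^2 * (∑ i ∈ s, 1/(i:ℝ)^((4:ℝ)/3)) ≤ 17/8 * ε^2 * 4 := by
            apply mul_le_mul_of_nonneg_left this (by positivity)
        _ ≤ ε/4 := by nlinarith
  calc (∏ i ∈ s, (1 + δ i / 2 + 2 * δ i ^ 2))
      ≤ Real.exp (∑ i ∈ s, 17/8 * δ i ^ 2) * Real.sqrt (∏ i ∈ s, (1 + δ i)) := by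
        rw [← hsplit]; exact hstep
    _ ≤ Real.exp (ε/4) * Real.sqrt (∏ i ∈ s, (1 + δ i)) := by
        apply mul_le_mul_of_nonneg_right (Real.exp_le_exp.mpr hsum) (Real.sqrt_nonneg _)
end
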